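/- Let G be a simple graph and u a vertex of G having a pure branch u, v_1, ..., v_k with k ≥ 3, meaning v_k is a leaf and each v_i (1 ≤ i ≤ k) has degree at most 2 in G, with edges {u,v_1},{v_1,v_2},...,{v_{k-1},v_k}. Let H be the induced subgraph of G on V(G) \ {v_k, v_{k-1}, v_{k-2}}. Then τ_max(H) ≤ τ_max(G) − 2. -/

import Mathlib

/-- `C` is a vertex cover of the graph `G`. -/
def gIsCover {V : Type} (G : SimpleGraph V) (C : Finset V) : Prop :=
  ∀ ⦃x y⦄, G.Adj x y → x ∈ C ∨ y ∈ C

/-- `C` is a minimal vertex cover of `G`. -/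
def gIsMinCover {V : Type} (G : SimpleGraph V) (C : Finset V) : Prop :=
  gIsCover G C ∧ ∀ D ⊂ C, ¬ gIsCover G D

/-- `τ_max(G)`: the maximum cardinality of a minimal vertex cover of `G`. -/
noncomputable def gTauMax {V : Type} (G : SimpleGraph V) : ℕ :=
  sSup {m | ∃ C : Finset V, gIsMinCover G C ∧ C.card = m}

/-- The subgraph of `G` induced on the vertex subset `s` (kept on the same ambient
vertex type: all vertices outside `s` become isolated, which does not affect
minimal vertex covers). -/
def SimpleGraph.restrict {V : Type} (G : SimpleGraph V) (s : Set V) : SimpleGraph V where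
  Adj x y := G.Adj x y ∧ x ∈ s ∧ y ∈ s
  symm := ⟨fun x y ⟨h, hx, hy⟩ => ⟨h.symm, hy, hx⟩⟩
  loopless := ⟨fun x ⟨h, _, _⟩ => G.loopless.irrefl x h⟩

lemma gCover_mono {V : Type} {G : SimpleGraph V} {C D : Finset V} (h : C ⊆ D)
    (hC : gIsCover G C) : gIsCover G D :=
  fun x y hxy => (hC hxy).imp (@h x) (@h y)

lemma gMinCover_of_erase {V : Type} [DecidableEq V] {G : SimpleGraph V} {C : Finset V}
    (hc : gIsCover G C) (he : ∀ x ∈ C, ¬ gIsCover G (C.erase x)) : gIsMinCover G C := by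
  refine ⟨hc, fun D hD hcov => ?_⟩
  obtain ⟨x, hxC, hxD⟩ := Finset.exists_of_ssubset hD
  exact he x hxC (gCover_mono
    (fun y hy => Finset.mem_erase.mpr ⟨fun h => hxD (h ▸ hy), hD.subset hy⟩) hcov)

lemma exists_gMinCover {V : Type} [Fintype V] (G : SimpleGraph V) : ∃ C, gIsMinCover G C := by
  classical
  have hne : (Finset.univ.filter (fun C : Finset V => gIsCover G C)).Nonempty :=
    ⟨Finset.univ, Finset.mem_filter.mpr ⟨Finset.mem_univ _,
      fun x y _ => Or.inl (Finset.mem_univ x)⟩⟩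
  obtain ⟨C, hC, hmin⟩ := Finset.exists_min_image _ Finset.card hne
  rw [Finset.mem_filter] at hC
  refine ⟨C, hC.2, fun D hD hcov => ?_⟩
  have := hmin D (Finset.mem_filter.mpr ⟨Finset.mem_univ _, hcov⟩)
  exact absurd this (not_le.mpr (Finset.card_lt_card hD))

/-- If `u` has a pure branch `u, v₁, ..., v_k` (`k ≥ 3`, `v_k` a leaf,
every `v_i` of degree at most `2` in `G`), and `H` is the induced subgraph of `G` on
`V(G) \ {v_k, v_{k-1}, v_{k-2}}`, then `τ_max(H) ≤ τ_max(G) - 2`.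
Here `w i` denotes the `i`-th vertex of the path, with `w 0 = u`. -/
theorem stmt_5 {V : Type} [Fintype V] [DecidableEq V] (G : SimpleGraph V)
    [DecidableRel G.Adj] (u : V) (k : ℕ) (hk : 3 ≤ k)
    (w : Fin (k + 1) → V) (hw0 : w 0 = u) (hinj : Function.Injective w)
    (hadj : ∀ i : Fin k, G.Adj (w i.castSucc) (w i.succ))
    (hleaf : G.degree (w (Fin.last k)) = 1)
    (hdeg : ∀ i : Fin (k + 1), i ≠ 0 → G.degree (w i) ≤ 2) :
    gTauMax (G.restrict
        {x | x ≠ w ⟨k, by omega⟩ ∧ x ≠ w ⟨k - 1, by omega⟩ ∧ x ≠ w ⟨k - 2, by omega⟩}) + 2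
      ≤ gTauMax G := by
  classical
  -- named vertices
  set d : V := w ⟨k, by omega⟩ with hdDef
  set c : V := w ⟨k-1, by omega⟩ with hcDef
  set b : V := w ⟨k-2, by omega⟩ with hbDef
  set a : V := w ⟨k-3, by omega⟩ with haDef
  set s : Set V := {x | x ≠ d ∧ x ≠ c ∧ x ≠ b} with hsDef
  set H : SimpleGraph V := G.restrict s with hHDef
  -- adjacency along the branch
  have hAdjStep : ∀ j, (hj : j < k) → G.Adj (w ⟨j, by omega⟩) (w ⟨j+1, by omega⟩) :=
    fun j hj => hadj ⟨j, hj⟩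
  have hab : G.Adj a b := by
    have h := hAdjStep (k-3) (by omega)
    have e : (⟨k-3+1, by omega⟩ : Fin (k+1)) = ⟨k-2, by omega⟩ := by
      apply Fin.ext; show k-3+1 = k-2; omega
    rw [e] at h; exact h
  have hbc : G.Adj b c := by
    have h := hAdjStep (k-2) (by omega)
    have e : (⟨k-2+1, by omega⟩ : Fin (k+1)) = ⟨k-1, by omega⟩ := by
      apply Fin.ext; show k-2+1 = k-1; omega
    rw [e] at h; exact h
  have hcd : G.Adj c d := by
    have h := hAdjStep (k-1) (by omega)
    have e : (⟨k-1+1, by omega⟩ : Fin (k+1)) = ⟨k, by omega⟩ := by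
      apply Fin.ext; show k-1+1 = k; omega
    rw [e] at h; exact h
  -- distinctness
  have hwne : ∀ i j : ℕ, (hi : i < k+1) → (hj : j < k+1) → i ≠ j →
      w ⟨i, hi⟩ ≠ w ⟨j, hj⟩ := by
    intro i j hi hj hij h
    have h2 : (⟨i, hi⟩ : Fin (k+1)) = ⟨j, hj⟩ := hinj h
    rw [Fin.mk.injEq] at h2
    exact hij h2
  have hab' : a ≠ b := hwne _ _ (by omega) (by omega) (by omega)
  have hac : a ≠ c := hwne _ _ (by omega) (by omega) (by omega)
  have hbc' : b ≠ c := hwne _ _ (by omega) (by omega) (by omega)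
  have hbd : b ≠ d := hwne _ _ (by omega) (by omega) (by omega)
  have hcd' : c ≠ d := hwne _ _ (by omega) (by omega) (by omega)
  -- neighborhoods
  have hdN : G.neighborFinset d = {c} := by
    have hdeg1 : (G.neighborFinset d).card = 1 := by
      rw [SimpleGraph.card_neighborFinset_eq_degree]
      exact hleaf
    symm
    apply Finset.eq_of_subset_of_card_le
    · intro x hx
      rw [Finset.mem_singleton] at hx
      subst hx
      exact (SimpleGraph.mem_neighborFinset ..).mpr hcd.symm
    · rw [hdeg1]; simp
  have hdOnly : ∀ x, G.Adj d x → x = c := by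
    intro x hx
    have := (SimpleGraph.mem_neighborFinset ..).mpr hx
    rw [hdN, Finset.mem_singleton] at this; exact this
  have hcN : G.neighborFinset c = {b, d} := by
    have hdeg2 : (G.neighborFinset c).card ≤ 2 := by
      rw [SimpleGraph.card_neighborFinset_eq_degree]
      exact hdeg ⟨k-1, by omega⟩ (by simp [Fin.ext_iff]; omega)
    symm
    apply Finset.eq_of_subset_of_card_le
    · intro x hx
      rw [Finset.mem_insert, Finset.mem_singleton] at hx
      rcases hx with rfl | rfl
      · exact (SimpleGraph.mem_neighborFinset ..).mpr hbc.symm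
      · exact (SimpleGraph.mem_neighborFinset ..).mpr hcd
    · calc (G.neighborFinset c).card ≤ 2 := hdeg2
        _ = ({b, d} : Finset V).card := by rw [Finset.card_insert_of_notMem (by simp [hbd]), Finset.card_singleton]
  have hcOnly : ∀ x, G.Adj c x → x = b ∨ x = d := by
    intro x hx
    have := (SimpleGraph.mem_neighborFinset ..).mpr hx
    rw [hcN, Finset.mem_insert, Finset.mem_singleton] at this; exact this
  have hbN : G.neighborFinset b = {a, c} := by
    have hdeg2 : (G.neighborFinset b).card ≤ 2 := by
      rw [SimpleGraph.card_neighborFinset_eq_degree]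
      exact hdeg ⟨k-2, by omega⟩ (by simp [Fin.ext_iff]; omega)
    symm
    apply Finset.eq_of_subset_of_card_le
    · intro x hx
      rw [Finset.mem_insert, Finset.mem_singleton] at hx
      rcases hx with rfl | rfl
      · exact (SimpleGraph.mem_neighborFinset ..).mpr hab.symm
      · exact (SimpleGraph.mem_neighborFinset ..).mpr hbc
    · calc (G.neighborFinset b).card ≤ 2 := hdeg2
        _ = ({a, c} : Finset V).card := by rw [Finset.card_insert_of_notMem (by simp [hac]), Finset.card_singleton]
  have hbOnly : ∀ x, G.Adj b x → x = a ∨ x = c := by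
    intro x hx
    have := (SimpleGraph.mem_neighborFinset ..).mpr hx
    rw [hbN, Finset.mem_insert, Finset.mem_singleton] at this; exact this
  -- basic facts about H
  have hHAdj : ∀ x y, H.Adj x y ↔ G.Adj x y ∧ x ∈ s ∧ y ∈ s := fun x y => Iff.rfl
  have hsMem : ∀ x, x ∈ s ↔ x ≠ d ∧ x ≠ c ∧ x ≠ b := fun x => Iff.rfl
  -- the tau-max set for H is nonempty and bounded
  have hbddH : BddAbove {m | ∃ C : Finset V, gIsMinCover H C ∧ C.card = m} := by
    refine ⟨Fintype.card V, ?_⟩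
    rintro m ⟨C, _, rfl⟩
    exact (Finset.card_le_univ C).trans_eq (Finset.card_univ)
  have hbddG : BddAbove {m | ∃ C : Finset V, gIsMinCover G C ∧ C.card = m} := by
    refine ⟨Fintype.card V, ?_⟩
    rintro m ⟨C, _, rfl⟩
    exact (Finset.card_le_univ C).trans_eq (Finset.card_univ)
  have hneH : {m | ∃ C : Finset V, gIsMinCover H C ∧ C.card = m}.Nonempty := by
    obtain ⟨C, hC⟩ := exists_gMinCover H
    exact ⟨C.card, C, hC, rfl⟩
  obtain ⟨C, hminC, hcardC⟩ := Nat.sSup_mem hneH hbddH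
  -- b, c, d are not in C
  have notMem : ∀ x : V, x ≠ d ∧ x ≠ c ∧ x ≠ b → True := fun _ _ => trivial
  have isolated : ∀ x : V, (x = d ∨ x = c ∨ x = b) → x ∉ C := by
    intro x hx hxC
    refine hminC.2 (C.erase x) (Finset.erase_ssubset hxC) ?_
    intro p q hpq
    have hp : p ∈ s := ((hHAdj p q).mp hpq).2.1
    have hq : q ∈ s := ((hHAdj p q).mp hpq).2.2
    have hpx : p ≠ x := by
      rcases hx with rfl | rfl | rfl
      · exact hp.1
      · exact hp.2.1
      · exact hp.2.2
    have hqx : q ≠ x := by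
      rcases hx with rfl | rfl | rfl
      · exact hq.1
      · exact hq.2.1
      · exact hq.2.2
    rcases hminC.1 hpq with h | h
    · exact Or.inl (Finset.mem_erase.mpr ⟨hpx, h⟩)
    · exact Or.inr (Finset.mem_erase.mpr ⟨hqx, h⟩)
  have hbC : b ∉ C := isolated b (Or.inr (Or.inr rfl))
  have hcC : c ∉ C := isolated c (Or.inr (Or.inl rfl))
  have hdC : d ∉ C := isolated d (Or.inl rfl)
  -- the extended cover
  set C' : Finset V := insert d (insert b C) with hC'Def
  have hdC' : d ∉ insert b C := by
    simp only [Finset.mem_insert]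
    rintro (h | h)
    · exact hbd h.symm
    · exact hdC h
  have hcC' : c ∉ C' := by
    simp only [hC'Def, Finset.mem_insert]
    rintro (h | h | h)
    · exact hcd' h
    · exact hbc' h.symm
    · exact hcC h
  have hcardC' : C'.card = C.card + 2 := by
    rw [hC'Def, Finset.card_insert_of_notMem hdC', Finset.card_insert_of_notMem hbC]
  -- C' is a cover of G
  have hcov' : gIsCover G C' := by
    intro x y hxy
    by_cases hxd : x = d
    · exact Or.inl (by simp [hC'Def, hxd])
    by_cases hxb : x = b
    · exact Or.inl (by simp [hC'Def, hxb])
    by_cases hyd : y = d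
    · exact Or.inr (by simp [hC'Def, hyd])
    by_cases hyb : y = b
    · exact Or.inr (by simp [hC'Def, hyb])
    by_cases hxc : x = c
    · subst hxc
      rcases hcOnly y hxy with rfl | rfl
      · exact absurd rfl hyb
      · exact absurd rfl hyd
    by_cases hyc : y = c
    · subst hyc
      rcases hcOnly x hxy.symm with rfl | rfl
      · exact absurd rfl hxb
      · exact absurd rfl hxd
    have hH : H.Adj x y := (hHAdj x y).mpr ⟨hxy, ⟨hxd, hxc, hxb⟩, ⟨hyd, hyc, hyb⟩⟩
    rcases hminC.1 hH with h | h
    · exact Or.inl (by simp [hC'Def, h])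
    · exact Or.inr (by simp [hC'Def, h])
  -- C' is a minimal cover of G
  have hmin' : gIsMinCover G C' := by
    refine gMinCover_of_erase hcov' ?_
    intro x hx hcovE
    simp only [hC'Def, Finset.mem_insert] at hx
    rcases hx with rfl | rfl | hx
    · -- x = d : edge c-d uncovered
      rcases hcovE hcd with h | h
      · exact hcC' (Finset.mem_of_mem_erase h)
      · exact (Finset.mem_erase.mp h).1 rfl
    · -- x = b : edge b-c uncovered
      rcases hcovE hbc with h | h
      · exact (Finset.mem_erase.mp h).1 rfl
      · exact hcC' (Finset.mem_of_mem_erase h)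
    · -- x ∈ C
      have hne : ¬ gIsCover H (C.erase x) :=
        hminC.2 (C.erase x) (Finset.erase_ssubset hx)
      rw [gIsCover] at hne
      push_neg at hne
      obtain ⟨p, q, hpq, hpE, hqE⟩ := hne
      have hp : p ∈ s := ((hHAdj p q).mp hpq).2.1
      have hq : q ∈ s := ((hHAdj p q).mp hpq).2.2
      rcases hcovE ((hHAdj p q).mp hpq).1 with h | h
      · rw [Finset.mem_erase, hC'Def, Finset.mem_insert, Finset.mem_insert] at h
        rcases h.2 with rfl | rfl | hpc
        · exact hp.1 rfl
        · exact hp.2.2 rfl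
        · exact hpE (Finset.mem_erase.mpr ⟨h.1, hpc⟩)
      · rw [Finset.mem_erase, hC'Def, Finset.mem_insert, Finset.mem_insert] at h
        rcases h.2 with rfl | rfl | hqc
        · exact hq.1 rfl
        · exact hq.2.2 rfl
        · exact hqE (Finset.mem_erase.mpr ⟨h.1, hqc⟩)
  -- conclude
  have hle : C.card + 2 ≤ gTauMax G := by
    have : C'.card ∈ {m | ∃ C : Finset V, gIsMinCover G C ∧ C.card = m} := ⟨C', hmin', rfl⟩
    have h2 := le_csSup hbddG this
    rwa [hcardC'] at h2
  have hgoal : gTauMax H = C.card := hcardC.symm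
  rw [hgoal]
  exact hle
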